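/- arXiv:2404.08323 — 2 statements merged into one kernel-verified Lean document; each statement's English description precedes it below -/
import Mathlib

section
/- Let g be analytic on the unit disc with g' bounded on a Carleson box S(I) (I an arc of the circle centered at a with |I| ≤ 2δ), and suppose g' (1-|z|²)^{1/2} induces a Carleson measure (g ∈ BMOA). Then the measure dμ(z) = |g'(z)|²/|z-a|² · (1-|z|²) dA(z) is a Carleson measure on the unit disc. -/
open Complex MeasureTheory

/-- The Carleson box `S(I)` over the arc of length `ℓ` centered at `a ∈ ∂𝔻`. -/
def carlesonBox (a : ℂ) (ℓ : ℝ) : Set ℂ :=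
  {z : ℂ | 1 - ℓ < ‖z‖ ∧ ‖z‖ < 1 ∧
    |Complex.arg (z * (starRingEnd ℂ) a)| ≤ ℓ / 2}

/-- A nonnegative weight `w` on the disc induces a Carleson measure `w dA` if
`∫_{S(I)} w ≲ |I|` for all arcs `I`. -/
def IsCarlesonWeight (w : ℂ → ℝ) : Prop :=
  ∃ C : ℝ, ∀ a : ℂ, ‖a‖ = 1 → ∀ ℓ : ℝ, 0 < ℓ → ℓ ≤ 1 →
    (∫ z in carlesonBox a ℓ, w z ∂volume) ≤ C * ℓ

open Set Metric Real

-- 1D lemma: |x|^(-1/2) integrable near 0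
lemma oneD : IntervalIntegrable (fun x : ℝ => |x| ^ (-(1/2) : ℝ)) volume (-2) 2 := by
  have h1 : IntervalIntegrable (fun x : ℝ => x ^ (-(1/2) : ℝ)) volume 0 2 :=
    intervalIntegral.intervalIntegrable_rpow' (by norm_num)
  have h2 : IntervalIntegrable (fun x : ℝ => (-x) ^ (-(1/2) : ℝ)) volume (-2) 0 := by
    have := (IntervalIntegrable.iff_comp_neg (by simp)).mp h1
    simpa using this.symm
  have e1 : IntervalIntegrable (fun x : ℝ => |x| ^ (-(1/2) : ℝ)) volume 0 2 := by
    rw [intervalIntegrable_iff_integrableOn_Ioo_of_le (by norm_num)] at h1 ⊢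
    exact h1.congr_fun (fun x hx => by rw [abs_of_pos hx.1]) measurableSet_Ioo
  have e2 : IntervalIntegrable (fun x : ℝ => |x| ^ (-(1/2) : ℝ)) volume (-2) 0 := by
    rw [intervalIntegrable_iff_integrableOn_Ioo_of_le (by norm_num)] at h2 ⊢
    exact h2.congr_fun (fun x hx => by rw [abs_of_neg hx.2]) measurableSet_Ioo
  exact e2.trans e1

lemma nullRe (c : ℝ) : volume {z : ℂ | z.re = c} = 0 := by
  have h : {z : ℂ | z.re = c} = Complex.measurableEquivRealProd ⁻¹' ({c} ×ˢ (univ : Set ℝ)) := by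
    ext z; simp [Complex.measurableEquivRealProd, Complex.equivRealProd, eq_comm]
  rw [h, Complex.volume_preserving_equiv_real_prod.measure_preimage
    (((measurableSet_singleton c).prod MeasurableSet.univ).nullMeasurableSet)]
  rw [Measure.volume_eq_prod, Measure.prod_prod]
  simp

lemma nullIm (c : ℝ) : volume {z : ℂ | z.im = c} = 0 := by
  have h : {z : ℂ | z.im = c} = Complex.measurableEquivRealProd ⁻¹' ((univ : Set ℝ) ×ˢ {c}) := by
    ext z; simp [Complex.measurableEquivRealProd, Complex.equivRealProd, eq_comm]
  rw [h, Complex.volume_preserving_equiv_real_prod.measure_preimage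
    ((MeasurableSet.univ.prod (measurableSet_singleton c)).nullMeasurableSet)]
  rw [Measure.volume_eq_prod, Measure.prod_prod]
  simp
-- product function integrable on ℂ
lemma prodInt (a : ℂ) :
    IntegrableOn (fun z : ℂ => |z.re - a.re| ^ (-(1/2) : ℝ) * |z.im - a.im| ^ (-(1/2) : ℝ))
      {z : ℂ | z.re ∈ Ioo (a.re - 2) (a.re + 2) ∧ z.im ∈ Ioo (a.im - 2) (a.im + 2)} volume := by
  have h1 : IntegrableOn (fun x : ℝ => |x - a.re| ^ (-(1/2) : ℝ))
      (Ioo (a.re - 2) (a.re + 2)) volume := by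
    have := (oneD.comp_sub_right a.re)
    rw [intervalIntegrable_iff_integrableOn_Ioo_of_le (by linarith)] at this
    have heq : (-2 : ℝ) + a.re = a.re - 2 := by ring
    have heq2 : (2 : ℝ) + a.re = a.re + 2 := by ring
    rwa [heq, heq2] at this
  have h2 : IntegrableOn (fun x : ℝ => |x - a.im| ^ (-(1/2) : ℝ))
      (Ioo (a.im - 2) (a.im + 2)) volume := by
    have := (oneD.comp_sub_right a.im)
    rw [intervalIntegrable_iff_integrableOn_Ioo_of_le (by linarith)] at this
    have heq : (-2 : ℝ) + a.im = a.im - 2 := by ring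
    have heq2 : (2 : ℝ) + a.im = a.im + 2 := by ring
    rwa [heq, heq2] at this
  have hprod : IntegrableOn
      (fun p : ℝ × ℝ => |p.1 - a.re| ^ (-(1/2) : ℝ) * |p.2 - a.im| ^ (-(1/2) : ℝ))
      ((Ioo (a.re - 2) (a.re + 2)) ×ˢ (Ioo (a.im - 2) (a.im + 2))) volume := by
    rw [IntegrableOn, Measure.volume_eq_prod, ← Measure.prod_restrict]
    exact h1.mul_prod h2
  have := (Complex.volume_preserving_equiv_real_prod.integrableOn_comp_preimage
    (MeasurableEquiv.measurableEmbedding _)).mpr hprod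
  have hset : Complex.measurableEquivRealProd ⁻¹'
      ((Ioo (a.re - 2) (a.re + 2)) ×ˢ (Ioo (a.im - 2) (a.im + 2))) =
      {z : ℂ | z.re ∈ Ioo (a.re - 2) (a.re + 2) ∧ z.im ∈ Ioo (a.im - 2) (a.im + 2)} := by
    ext z; simp [Complex.measurableEquivRealProd, Complex.equivRealProd]
  rw [hset] at this
  exact this.congr_fun (fun z _ => rfl) (by
    have : MeasurableSet ({z : ℂ | z.re ∈ Ioo (a.re - 2) (a.re + 2) ∧
        z.im ∈ Ioo (a.im - 2) (a.im + 2)}) := by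
      apply MeasurableSet.inter
      · exact measurableSet_Ioo.preimage Complex.measurable_re
      · exact measurableSet_Ioo.preimage Complex.measurable_im
    exact this)
lemma invInt (a : ℂ) (ha : ‖a‖ = 1) :
    IntegrableOn (fun z : ℂ => (‖z - a‖)⁻¹) (ball (0:ℂ) 1) volume := by
  have hsub : ball (0:ℂ) 1 ⊆ {z : ℂ | z.re ∈ Ioo (a.re - 2) (a.re + 2) ∧
      z.im ∈ Ioo (a.im - 2) (a.im + 2)} := by
    intro z hz
    simp only [mem_ball, dist_zero_right] at hz
    have hre : |z.re| ≤ ‖z‖ := Complex.abs_re_le_norm z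
    have him : |z.im| ≤ ‖z‖ := Complex.abs_im_le_norm z
    have hare : |a.re| ≤ 1 := by rw [← ha]; exact Complex.abs_re_le_norm a
    have haim : |a.im| ≤ 1 := by rw [← ha]; exact Complex.abs_im_le_norm a
    rw [abs_le] at hare haim
    rw [abs_le] at hre him
    simp only [mem_setOf_eq, mem_Ioo]
    refine ⟨⟨?_, ?_⟩, ?_, ?_⟩ <;> linarith
  have hK := (prodInt a).mono_set hsub
  apply hK.integrable.mono'
  · exact ((continuous_norm.comp (continuous_id.sub continuous_const)).measurable.inv).aestronglyMeasurable
  · -- a.e. bound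
    have hnull : volume ({z : ℂ | z.re = a.re} ∪ {z : ℂ | z.im = a.im}) = 0 :=
      le_antisymm (le_trans (measure_union_le _ _) (by rw [nullRe, nullIm]; simp)) (by simp)
    have hnull' : ∀ᵐ z ∂(volume.restrict (ball (0:ℂ) 1)),
        z ∉ ({z : ℂ | z.re = a.re} ∪ {z : ℂ | z.im = a.im}) :=
      ae_restrict_of_ae (by
        rw [ae_iff]
        simp only [not_not]
        exact hnull)
    filter_upwards [hnull'] with z hz
    simp only [mem_union, mem_setOf_eq, not_or] at hz
    obtain ⟨h1, h2⟩ := hz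
    have hx : 0 < |z.re - a.re| := abs_pos.mpr (sub_ne_zero.mpr h1)
    have hy : 0 < |z.im - a.im| := abs_pos.mpr (sub_ne_zero.mpr h2)
    rw [Real.norm_eq_abs, _root_.abs_of_nonneg (inv_nonneg.mpr (norm_nonneg _))]
    have key : Real.sqrt (|z.re - a.re| * |z.im - a.im|) ≤ ‖z - a‖ := by
      rw [show ‖z - a‖ = Real.sqrt (‖z-a‖ ^ 2) by
        rw [Real.sqrt_sq (norm_nonneg _)]]
      apply Real.sqrt_le_sqrt
      have : ‖z - a‖ ^ 2 = (z.re - a.re)^2 + (z.im - a.im)^2 := by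
        rw [Complex.sq_norm, Complex.normSq_apply]
        simp [Complex.sub_re, Complex.sub_im]; ring
      rw [this]
      nlinarith [abs_nonneg (z.re - a.re), abs_nonneg (z.im - a.im), _root_.sq_abs (z.re - a.re),
        _root_.sq_abs (z.im - a.im), sq_nonneg (|z.re - a.re| - |z.im - a.im|)]
    have hRHS : |z.re - a.re| ^ (-(1/2) : ℝ) * |z.im - a.im| ^ (-(1/2) : ℝ)
        = (Real.sqrt (|z.re - a.re| * |z.im - a.im|))⁻¹ := by
      rw [← Real.mul_rpow hx.le hy.le, Real.sqrt_eq_rpow,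
        ← Real.rpow_neg (mul_nonneg hx.le hy.le)]
    rw [hRHS]
    apply inv_anti₀ _ key
    exact Real.sqrt_pos.mpr (mul_pos hx hy)
lemma wlogInt (a : ℂ) (ha : ‖a‖ = 1) :
    IntegrableOn (fun z : ℂ => (1 - ‖z‖ ^ 2) / ‖z - a‖ ^ 2)
      (ball (0:ℂ) 1) volume := by
  apply (((invInt a ha).const_mul 2).mono' ?_ ?_)
  · have m1 : Measurable (fun z : ℂ => (1 - ‖z‖ ^ 2) / ‖z - a‖ ^ 2) := by
      apply Measurable.div
      · exact (measurable_const.sub ((continuous_norm.measurable).pow_const 2))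
      · exact ((continuous_norm.measurable.comp (measurable_id.sub_const a)).pow_const 2)
    exact m1.aestronglyMeasurable
  · rw [ae_restrict_iff' measurableSet_ball]
    apply ae_of_all
    intro z hz
    simp only [mem_ball, dist_zero_right] at hz
    have hz1 : ‖z‖ < 1 := by exact hz
    have hpos : 0 < ‖z - a‖ := by
      rw [norm_pos_iff]
      intro h
      rw [sub_eq_zero] at h
      rw [h] at hz1; rw [ha] at hz1; exact lt_irrefl 1 hz1
    have hb : 1 - ‖z‖ ≤ ‖z - a‖ := by
      calc 1 - ‖z‖ = ‖a‖ - ‖z‖ := by rw [ha]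
        _ ≤ ‖a - z‖ := by
            simpa using norm_sub_norm_le a z
        _ = ‖z - a‖ := by rw [norm_sub_rev]
    have hnn : 0 ≤ 1 - ‖z‖ ^ 2 := by nlinarith [norm_nonneg z]
    rw [Real.norm_eq_abs, _root_.abs_of_nonneg (div_nonneg hnn (by positivity))]
    rw [div_le_iff₀ (by positivity)]
    have : (2 : ℝ) * (‖z - a‖)⁻¹ * ‖z - a‖ ^ 2
        = 2 * ‖z - a‖ := by
      field_simp
    rw [this]
    nlinarith [norm_nonneg z, hz1, hb, hpos]
lemma geomLB (a : ℂ) (ha : ‖a‖ = 1) (δ : ℝ) (hδ : 0 < δ) (z : ℂ)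
    (hz : ‖z‖ < 1) (hnb : z ∉ carlesonBox a (2 * δ)) :
    min (2 * δ) (1 - Real.cos (min δ (π / 2))) ≤ ‖z - a‖ := by
  simp only [carlesonBox, mem_setOf_eq, not_and, not_le] at hnb
  by_cases hr : 1 - 2 * δ < ‖z‖
  · -- arg case
    have harg : δ < |Complex.arg (z * (starRingEnd ℂ) a)| := by
      have := hnb hr hz
      linarith [this]
    set w := z * (starRingEnd ℂ) a with hw
    have hwabs : ‖w‖ = ‖z‖ := by
      rw [hw, norm_mul, Complex.norm_conj, ha, mul_one]
    have hca : (starRingEnd ℂ) a * a = 1 := by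
      rw [mul_comm, Complex.mul_conj]
      rw [← Complex.sq_norm] at *
      rw [ha]; norm_num
    have hza : z - a = (w - 1) * a := by
      rw [hw]
      linear_combination (-z) * hca
    have habs : ‖z - a‖ = ‖w - 1‖ := by
      rw [hza, norm_mul, ha, mul_one]
    set t := min δ (π / 2) with ht
    have ht0 : 0 < t := lt_min hδ (by positivity)
    have htpi2 : t ≤ π / 2 := min_le_right _ _
    have hcos0 : 0 ≤ Real.cos t :=
      Real.cos_nonneg_of_mem_Icc ⟨by linarith, htpi2⟩
    have hrew : w.re ≤ Real.cos t := by
      by_cases hw0 : w = 0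
      · rw [hw0]; simpa using hcos0
      · have hcosarg : Real.cos (Complex.arg w) = w.re / ‖w‖ :=
          Complex.cos_arg hw0
        have hw_pos : 0 < ‖w‖ := norm_pos_iff.mpr hw0
        have hre_eq : w.re = ‖w‖ * Real.cos (Complex.arg w) := by
          rw [hcosarg]; field_simp
        by_cases hcs : Real.cos (Complex.arg w) ≤ 0
        · rw [hre_eq]
          have : ‖w‖ * Real.cos (Complex.arg w) ≤ 0 :=
            mul_nonpos_of_nonneg_of_nonpos hw_pos.le hcs
          linarith
        · push_neg at hcs
          have h1 : Real.cos (Complex.arg w) = Real.cos |Complex.arg w| := by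
            rw [Real.cos_abs]
          have h2 : Real.cos |Complex.arg w| ≤ Real.cos t := by
            apply Real.cos_le_cos_of_nonneg_of_le_pi ht0.le
              (Complex.abs_arg_le_pi w)
            exact le_trans (le_trans (min_le_left _ _) harg.le) le_rfl
          rw [hre_eq]
          calc ‖w‖ * Real.cos (Complex.arg w)
              ≤ 1 * Real.cos (Complex.arg w) := by
                apply mul_le_mul_of_nonneg_right _ hcs.le
                rw [hwabs]; exact hz.le
            _ = Real.cos (Complex.arg w) := one_mul _
            _ ≤ Real.cos t := by rw [h1]; exact h2
    have : 1 - Real.cos t ≤ ‖w - 1‖ := by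
      calc 1 - Real.cos t ≤ 1 - w.re := by linarith
        _ ≤ |w.re - 1| := by rw [abs_sub_comm]; exact le_abs_self _
        _ = |(w - 1).re| := by simp
        _ ≤ ‖w - 1‖ := Complex.abs_re_le_norm _
    rw [habs]
    exact le_trans (min_le_right _ _) this
  · push_neg at hr
    have : 2 * δ ≤ ‖z - a‖ := by
      calc 2 * δ ≤ 1 - ‖z‖ := by linarith
        _ = ‖a‖ - ‖z‖ := by rw [ha]
        _ ≤ ‖a - z‖ := by
            simpa using norm_sub_norm_le a z
        _ = ‖z - a‖ := by rw [norm_sub_rev]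
    exact le_trans (min_le_left _ _) this

lemma boxMeas (b : ℂ) (ℓ : ℝ) : MeasurableSet (carlesonBox b ℓ) := by
  have h : carlesonBox b ℓ = {z : ℂ | 1 - ℓ < ‖z‖} ∩
      ({z : ℂ | ‖z‖ < 1} ∩
       {z : ℂ | |Complex.arg (z * (starRingEnd ℂ) b)| ≤ ℓ / 2}) := rfl
  rw [h]
  have mabs : Measurable (fun z : ℂ => ‖z‖) := continuous_norm.measurable
  refine (measurableSet_lt measurable_const mabs).inter
    ((measurableSet_lt mabs measurable_const).inter ?_)
  exact measurableSet_le
    ((Complex.measurable_arg.comp (measurable_mul_const _)).abs) measurable_const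

lemma boxSubBall (b : ℂ) (ℓ : ℝ) : carlesonBox b ℓ ⊆ Metric.ball (0:ℂ) 1 := by
  intro z hz
  simp only [Metric.mem_ball, dist_zero_right]
  exact hz.2.1

/-- If `g` is analytic on the disc with `g'` bounded on the Carleson box over the arc `I`
centered at `a` of length `2δ`, `|g'|²(1-|z|²)dA` is Carleson (`g ∈ BMOA`), and
`(1-|z|²)/|z-a|² dA` is Carleson, then `|g'(z)|²(1-|z|²)/|z-a|² dA` is a Carleson measure. -/
theorem stmt3 (g : ℂ → ℂ) (hg : DifferentiableOn ℂ g (Metric.ball (0 : ℂ) 1))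
    (a : ℂ) (ha : ‖a‖ = 1) (δ : ℝ) (hδ : 0 < δ) (C : ℝ)
    (hbound : ∀ z ∈ carlesonBox a (2 * δ), ‖deriv g z‖ ≤ C)
    (hBMOA : IsCarlesonWeight
      (fun z => ‖deriv g z‖ ^ 2 * (1 - ‖z‖ ^ 2)))
    (hlog : IsCarlesonWeight
      (fun z => (1 - ‖z‖ ^ 2) / ‖z - a‖ ^ 2)) :
    IsCarlesonWeight
      (fun z => ‖deriv g z‖ ^ 2 * (1 - ‖z‖ ^ 2)
        / ‖z - a‖ ^ 2) := by
  obtain ⟨CL, hCL⟩ := hlog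
  obtain ⟨CB, hCB⟩ := hBMOA
  set c : ℝ := min (2 * δ) (1 - Real.cos (min δ (π / 2))) with hcdef
  have hc0 : 0 < c := by
    apply lt_min (by linarith)
    have h1 : 0 < min δ (π / 2) := lt_min hδ (by positivity)
    have h2 : Real.cos (min δ (π / 2)) < Real.cos 0 :=
      Real.cos_lt_cos_of_nonneg_of_le_pi le_rfl
        (le_trans (min_le_right _ _) (by linarith [Real.pi_pos])) h1
    rw [Real.cos_zero] at h2
    linarith
  set W : ℂ → ℝ := fun z => ‖deriv g z‖ ^ 2 * (1 - ‖z‖ ^ 2)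
    / ‖z - a‖ ^ 2 with hWdef
  set WL : ℂ → ℝ := fun z => (1 - ‖z‖ ^ 2) / ‖z - a‖ ^ 2 with hWLdef
  set WB : ℂ → ℝ := fun z => ‖deriv g z‖ ^ 2 * (1 - ‖z‖ ^ 2) with hWBdef
  have hWmeas : Measurable W := by
    apply Measurable.div
    · exact ((continuous_norm.measurable.comp (measurable_deriv g)).pow_const 2).mul
        (measurable_const.sub (continuous_norm.measurable.pow_const 2))
    · exact (continuous_norm.measurable.comp (measurable_id.sub_const a)).pow_const 2
  refine ⟨C ^ 2 * CL + (c ^ 2)⁻¹ * CB, ?_⟩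
  intro b hb ℓ hl hl1
  set S := carlesonBox b ℓ with hSdef
  have hSm : MeasurableSet S := boxMeas b ℓ
  have hSball : S ⊆ Metric.ball (0:ℂ) 1 := boxSubBall b ℓ
  -- basic pointwise facts on S
  have habs_lt : ∀ z ∈ S, ‖z‖ < 1 := fun z hz => hz.2.1
  have hza_pos : ∀ z ∈ S, 0 < ‖z - a‖ := by
    intro z hz
    rw [norm_pos_iff]
    intro h
    rw [sub_eq_zero] at h
    have := habs_lt z hz
    rw [h, ha] at this
    exact lt_irrefl 1 this
  have hWLnn : ∀ z ∈ S, 0 ≤ WL z := by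
    intro z hz
    have := habs_lt z hz
    apply div_nonneg (by nlinarith [norm_nonneg z]) (sq_nonneg _)
  have hWBnn : ∀ z ∈ S, 0 ≤ WB z := by
    intro z hz
    have := habs_lt z hz
    apply mul_nonneg (sq_nonneg _) (by nlinarith [norm_nonneg z])
  have hWnn : ∀ z ∈ S, 0 ≤ W z := fun z hz =>
    div_nonneg (mul_nonneg (sq_nonneg _)
      (by nlinarith [norm_nonneg z, habs_lt z hz])) (sq_nonneg _)
  have hWL_int : IntegrableOn WL S volume := (wlogInt a ha).mono_set hSball
  have hILpos : 0 ≤ ∫ z in S, WL z := setIntegral_nonneg hSm hWLnn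
  have hIBpos : 0 ≤ ∫ z in S, WB z := setIntegral_nonneg hSm hWBnn
  have hCL' := hCL b hb ℓ hl hl1
  have hCB' := hCB b hb ℓ hl hl1
  have hCL0 : 0 ≤ CL := by nlinarith
  have hCB0 : 0 ≤ CB := by nlinarith
  by_cases hInt : IntegrableOn W S volume
  · -- integrable case
    have hWB_int : IntegrableOn WB S volume := by
      have hWBmeas : Measurable WB :=
        ((continuous_norm.measurable.comp (measurable_deriv g)).pow_const 2).mul
          (measurable_const.sub (continuous_norm.measurable.pow_const 2))
      apply (hInt.const_mul 4).mono' hWBmeas.aestronglyMeasurable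
      rw [ae_restrict_iff' hSm]
      apply ae_of_all
      intro z hz
      have hd : 0 < ‖z - a‖ ^ 2 := pow_pos (hza_pos z hz) 2
      have hd4 : ‖z - a‖ ^ 2 ≤ 4 := by
        have h1 : ‖z - a‖ ≤ ‖z‖ + ‖a‖ := by
          simpa using norm_sub_le z a
        have := habs_lt z hz
        nlinarith [norm_nonneg (z - a)]
      rw [Real.norm_eq_abs, _root_.abs_of_nonneg (hWBnn z hz)]
      have hWeq : WB z = ‖z - a‖ ^ 2 * W z := by
        rw [hWdef, hWBdef]
        field_simp [(hza_pos z hz).ne']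
      rw [hWeq]
      exact mul_le_mul_of_nonneg_right hd4 (hWnn z hz)
    -- pointwise bound
    have hMono : ∀ z ∈ S, W z ≤ C ^ 2 * WL z + (c ^ 2)⁻¹ * WB z := by
      intro z hz
      by_cases hzB : z ∈ carlesonBox a (2 * δ)
      · have hgC : ‖deriv g z‖ ≤ C := hbound z hzB
        have hsq : ‖deriv g z‖ ^ 2 ≤ C ^ 2 :=
          pow_le_pow_left₀ (norm_nonneg _) hgC 2
        have h1 : W z ≤ C ^ 2 * WL z := by
          rw [hWdef, hWLdef]
          simp only
          rw [mul_div_assoc] at *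
          apply mul_le_mul_of_nonneg_right hsq (hWLnn z hz)
        have h2 : 0 ≤ (c ^ 2)⁻¹ * WB z :=
          mul_nonneg (inv_nonneg.mpr (sq_nonneg c)) (hWBnn z hz)
        linarith
      · have hgeom : c ≤ ‖z - a‖ := geomLB a ha δ hδ z (habs_lt z hz) hzB
        have h1 : W z ≤ (c ^ 2)⁻¹ * WB z := by
          rw [hWdef, hWBdef]
          simp only
          rw [inv_mul_eq_div]
          have hnum : 0 ≤ ‖deriv g z‖ ^ 2 * (1 - ‖z‖ ^ 2) :=
            mul_nonneg (sq_nonneg _)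
              (by nlinarith [norm_nonneg z, habs_lt z hz])
          rw [div_le_div_iff₀ (pow_pos (hza_pos z hz) 2) (pow_pos hc0 2)]
          exact mul_le_mul_of_nonneg_left (pow_le_pow_left₀ hc0.le hgeom 2) hnum
        have h2 : 0 ≤ C ^ 2 * WL z := mul_nonneg (sq_nonneg C) (hWLnn z hz)
        linarith
    have hRHS_int : IntegrableOn (fun z => C ^ 2 * WL z + (c ^ 2)⁻¹ * WB z) S volume :=
      (hWL_int.const_mul _).add (hWB_int.const_mul _)
    calc (∫ z in S, W z) ≤ ∫ z in S, (C ^ 2 * WL z + (c ^ 2)⁻¹ * WB z) :=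
          setIntegral_mono_on hInt hRHS_int hSm hMono
      _ = C ^ 2 * (∫ z in S, WL z) + (c ^ 2)⁻¹ * (∫ z in S, WB z) := by
          rw [integral_add (hWL_int.const_mul _) (hWB_int.const_mul _),
            MeasureTheory.integral_const_mul, MeasureTheory.integral_const_mul]
      _ ≤ C ^ 2 * (CL * ℓ) + (c ^ 2)⁻¹ * (CB * ℓ) := by
          apply add_le_add
          · exact mul_le_mul_of_nonneg_left hCL' (sq_nonneg C)
          · exact mul_le_mul_of_nonneg_left hCB' (inv_nonneg.mpr (sq_nonneg c))
      _ = (C ^ 2 * CL + (c ^ 2)⁻¹ * CB) * ℓ := by ring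
  · -- non-integrable case: integral is zero
    have h0 : (∫ z in S, W z) = 0 := integral_undef hInt
    rw [hSdef] at h0
    rw [show (∫ z in carlesonBox b ℓ, ‖deriv g z‖ ^ 2 * (1 - ‖z‖ ^ 2)
        / ‖z - a‖ ^ 2) = 0 from h0]
    have : 0 ≤ (C ^ 2 * CL + (c ^ 2)⁻¹ * CB) * ℓ := by
      apply mul_nonneg _ hl.le
      exact add_nonneg (mul_nonneg (sq_nonneg C) hCL0)
        (mul_nonneg (inv_nonneg.mpr (sq_nonneg c)) hCB0)
    linarith
end

section
/- For 1 ≤ p₁ < p₂ < ∞ and a ∈ ∂𝔻, the function F(z) = (1-z)^{-1/p₂} belongs to H^{p₁} but not to H^{p₂}; equivalently, sup_{r<1} ∫₀^{2π} |1-re^{iθ}|^{-p₁/p₂} dθ < ∞ while sup_{r<1} ∫₀^{2π} |1-re^{iθ}|^{-1} dθ = ∞. -/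
open Complex

lemma abs_sq_aux (r θ : ℝ) :
    (‖1 - (r:ℂ) * Complex.exp (θ * Complex.I)‖)^2
      = 1 - 2*r*Real.cos θ + r^2 := by
  rw [Complex.sq_norm, Complex.normSq_apply]
  simp [Complex.exp_ofReal_mul_I_re, Complex.exp_ofReal_mul_I_im]
  ring_nf
  nlinarith [Real.sin_sq_add_cos_sq θ]

lemma lower_bound (r θ : ℝ) (hr : 0 ≤ r) (hr1 : r ≤ 1) (hθ : θ ∈ Set.Icc 0 (2*Real.pi)) :
    Real.sin (θ/2) ≤ ‖1 - (r:ℂ) * Complex.exp (θ * Complex.I)‖ := by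
  have hs : Real.sin (θ/2) ^ 2 = (1 - Real.cos θ)/2 := by
    have h := Real.cos_sq (θ/2)
    have h2 : 2 * (θ/2) = θ := by ring
    rw [h2] at h
    nlinarith [Real.sin_sq_add_cos_sq (θ/2)]
  have hsnn : 0 ≤ Real.sin (θ/2) := by
    apply Real.sin_nonneg_of_nonneg_of_le_pi
    · linarith [hθ.1]
    · linarith [hθ.2]
  have h2 := abs_sq_aux r θ
  have hc1 : Real.cos θ ≤ 1 := Real.cos_le_one θ
  have hc2 : -1 ≤ Real.cos θ := Real.neg_one_le_cos θ
  have hsq : Real.sin (θ/2) ^ 2 ≤ (‖1 - (r:ℂ) * Complex.exp (θ * Complex.I)‖)^2 := by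
    rcases le_or_gt 0 (Real.cos θ) with hc | hc
    · nlinarith [sq_nonneg (r - Real.cos θ), mul_nonneg (by linarith : (0:ℝ) ≤ 1 - Real.cos θ)
        (by linarith : (0:ℝ) ≤ Real.cos θ + 1/2)]
    · nlinarith [sq_nonneg r, mul_nonneg hr (by linarith : (0:ℝ) ≤ -Real.cos θ)]
  have := Real.sqrt_le_sqrt hsq
  rwa [Real.sqrt_sq hsnn, Real.sqrt_sq (norm_nonneg _)] at this

lemma upper_bound (r θ : ℝ) (hr : 0 ≤ r) (hr1 : r ≤ 1) (hθ : 0 ≤ θ) :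
    ‖1 - (r:ℂ) * Complex.exp (θ * Complex.I)‖ ≤ (1 - r) + θ := by
  have h1 : (1:ℂ) - (r:ℂ) * Complex.exp (θ * Complex.I)
      = ((1:ℝ) - r : ℝ) + (r:ℂ) * (1 - Complex.exp (θ * Complex.I)) := by
    push_cast; ring
  rw [h1]
  have he : ‖1 - Complex.exp (θ * Complex.I)‖ ≤ θ := by
    have hsq : (‖1 - Complex.exp (θ * Complex.I)‖)^2 = 2 - 2*Real.cos θ := by
      have h := abs_sq_aux 1 θ
      simp only [Complex.ofReal_one, one_mul] at h
      linarith
    have hcos : 1 - θ^2/2 ≤ Real.cos θ := Real.one_sub_sq_div_two_le_cos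
    nlinarith [norm_nonneg (1 - Complex.exp (θ * Complex.I))]
  calc ‖(((1:ℝ) - r : ℝ) : ℂ) + (r:ℂ) * (1 - Complex.exp (θ * Complex.I))‖
      ≤ ‖(((1:ℝ) - r : ℝ) : ℂ)‖ + ‖(r:ℂ) * (1 - Complex.exp (θ * Complex.I))‖ :=
        norm_add_le _ _
    _ ≤ (1 - r) + θ := by
        rw [norm_mul, Complex.norm_real, Complex.norm_real, Real.norm_eq_abs, Real.norm_eq_abs,
          _root_.abs_of_nonneg (by linarith : (0:ℝ) ≤ 1 - r), _root_.abs_of_nonneg hr]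
        nlinarith

lemma one_sub_le_abs (r θ : ℝ) (hr : 0 ≤ r) :
    1 - r ≤ ‖1 - (r:ℂ) * Complex.exp (θ * Complex.I)‖ := by
  have h := norm_sub_norm_le (1 : ℂ) ((r:ℂ) * Complex.exp (θ * Complex.I))
  simp only [norm_one, norm_mul, Complex.norm_real, Real.norm_eq_abs,
    Complex.norm_exp_ofReal_mul_I, mul_one, _root_.abs_of_nonneg hr] at h
  exact h

lemma cont_abs (r : ℝ) :
    Continuous fun θ : ℝ => ‖1 - (r:ℂ) * Complex.exp (θ * Complex.I)‖ := by
  apply continuous_norm.comp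
  continuity

lemma part2 : ¬ (∃ M : ℝ, ∀ r ∈ Set.Ico (0 : ℝ) 1,
      (∫ θ in (0 : ℝ)..2 * Real.pi,
        ‖1 - (r : ℂ) * Complex.exp (θ * Complex.I)‖ ^ (-(1 : ℝ))) ≤ M) := by
  rintro ⟨M, hM⟩
  set ε := Real.exp (-(|M|+1)) with hεdef
  have hε0 : 0 < ε := Real.exp_pos _
  have hε1 : ε ≤ 1 := by
    rw [hεdef]
    apply Real.exp_le_one_iff.mpr
    nlinarith [abs_nonneg M]
  set r : ℝ := 1 - ε with hrdef
  have hr0 : 0 ≤ r := by simp [hrdef]; linarith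
  have hr1 : r < 1 := by simp [hrdef]; linarith
  have hπ := Real.pi_pos
  have habs_pos : ∀ θ : ℝ, 0 < ‖1 - (r:ℂ) * Complex.exp (θ * Complex.I)‖ := by
    intro θ
    have := one_sub_le_abs r θ hr0
    linarith
  -- rewrite rpow as inverse
  have hrw : (∫ θ in (0:ℝ)..2*Real.pi,
      ‖1 - (r:ℂ) * Complex.exp (θ * Complex.I)‖ ^ (-(1:ℝ)))
      = ∫ θ in (0:ℝ)..2*Real.pi,
        (‖1 - (r:ℂ) * Complex.exp (θ * Complex.I)‖)⁻¹ := by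
    apply intervalIntegral.integral_congr
    intro θ _
    exact Real.rpow_neg_one _
  have hfc : Continuous fun θ : ℝ =>
      (‖1 - (r:ℂ) * Complex.exp (θ * Complex.I)‖)⁻¹ :=
    (cont_abs r).inv₀ fun θ => (habs_pos θ).ne'
  have huicc : Set.uIcc (0:ℝ) (2*Real.pi) = Set.Icc 0 (2*Real.pi) :=
    Set.uIcc_of_le (by linarith)
  have hgc : ContinuousOn (fun θ : ℝ => (ε + θ)⁻¹) (Set.Icc 0 (2*Real.pi)) := by
    apply ContinuousOn.inv₀ (by fun_prop)
    intro θ hθ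
    have := hθ.1
    positivity
  have hg_int : IntervalIntegrable (fun θ : ℝ => (ε + θ)⁻¹) MeasureTheory.volume 0 (2*Real.pi) :=
    (hgc.mono (by rw [huicc])).intervalIntegrable
  have hf_int : IntervalIntegrable (fun θ : ℝ =>
      (‖1 - (r:ℂ) * Complex.exp (θ * Complex.I)‖)⁻¹)
      MeasureTheory.volume 0 (2*Real.pi) := hfc.intervalIntegrable _ _
  have hmono : (∫ θ in (0:ℝ)..2*Real.pi, (ε + θ)⁻¹)
      ≤ ∫ θ in (0:ℝ)..2*Real.pi,
        (‖1 - (r:ℂ) * Complex.exp (θ * Complex.I)‖)⁻¹ := by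
    apply intervalIntegral.integral_mono_on (by linarith) hg_int hf_int
    intro θ hθ
    have hub := upper_bound r θ hr0 hr1.le hθ.1
    have h1 : (1:ℝ) - r = ε := by rw [hrdef]; ring
    rw [h1] at hub
    exact inv_anti₀ (habs_pos θ) (by linarith)
  have hval : (∫ θ in (0:ℝ)..2*Real.pi, (ε + θ)⁻¹) = Real.log ((2*Real.pi + ε)/ε) := by
    have h1 : (∫ θ in (0:ℝ)..2*Real.pi, (ε + θ)⁻¹)
        = ∫ θ in (0:ℝ)..2*Real.pi, (θ + ε)⁻¹ := by
      apply intervalIntegral.integral_congr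
      intro θ _; simp [add_comm]
    rw [h1, intervalIntegral.integral_comp_add_right (fun x => x⁻¹) ε,
      integral_inv_of_pos (by linarith) (by linarith)]
    norm_num
  have hlog : Real.log ((2*Real.pi + ε)/ε) ≥ |M| + 1 := by
    have h2 : ε⁻¹ ≤ (2*Real.pi + ε)/ε := by
      rw [div_eq_mul_inv]
      have h3 : (0:ℝ) ≤ (2*Real.pi + ε - 1) * ε⁻¹ :=
        mul_nonneg (by nlinarith [Real.pi_gt_three]) (by positivity)
      nlinarith
    calc (|M| + 1 : ℝ) = Real.log ε⁻¹ := by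
          rw [Real.log_inv, hεdef, Real.log_exp]; ring
      _ ≤ Real.log ((2*Real.pi + ε)/ε) :=
          Real.log_le_log (by positivity) h2
  have hM' := hM r ⟨hr0, hr1⟩
  rw [hrw] at hM'
  have : |M| + 1 ≤ M := by linarith
  linarith [le_abs_self M]

lemma part1 (p₁ p₂ : ℝ) (hp₁ : 1 ≤ p₁) (hp : p₁ < p₂) :
    ∃ M : ℝ, ∀ r ∈ Set.Ico (0 : ℝ) 1,
      (∫ θ in (0 : ℝ)..2 * Real.pi,
        ‖1 - (r : ℂ) * Complex.exp (θ * Complex.I)‖ ^ (-(p₁ / p₂))) ≤ M := by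
  set α := p₁ / p₂ with hαdef
  have hπ := Real.pi_pos
  have hp₂ : 0 < p₂ := by linarith
  have hα0 : 0 < α := div_pos (by linarith) hp₂
  have hα1 : α < 1 := (div_lt_one hp₂).mpr hp
  have hneg : (-1:ℝ) < -α := by linarith
  refine ⟨(∫ θ in (0:ℝ)..Real.pi, (4:ℝ)^α * θ^(-α)) +
    (∫ θ in Real.pi..2*Real.pi, (4:ℝ)^α * (2*Real.pi - θ)^(-α)), ?_⟩
  rintro r ⟨hr0, hr1⟩
  have habs_pos : ∀ θ : ℝ, 0 < ‖1 - (r:ℂ) * Complex.exp (θ * Complex.I)‖ := by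
    intro θ
    have := one_sub_le_abs r θ hr0
    linarith
  set f : ℝ → ℝ := fun θ => ‖1 - (r:ℂ) * Complex.exp (θ * Complex.I)‖ ^ (-α)
    with hfdef
  have hfc : Continuous f :=
    (cont_abs r).rpow_const fun θ => Or.inl (habs_pos θ).ne'
  have hint1 : IntervalIntegrable f MeasureTheory.volume 0 Real.pi :=
    hfc.intervalIntegrable _ _
  have hint2 : IntervalIntegrable f MeasureTheory.volume Real.pi (2*Real.pi) :=
    hfc.intervalIntegrable _ _
  have hsplit : (∫ θ in (0:ℝ)..2*Real.pi, f θ)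
      = (∫ θ in (0:ℝ)..Real.pi, f θ) + ∫ θ in Real.pi..2*Real.pi, f θ :=
    (intervalIntegral.integral_add_adjacent_intervals hint1 hint2).symm
  have hg1_int : IntervalIntegrable (fun θ : ℝ => (4:ℝ)^α * θ^(-α))
      MeasureTheory.volume 0 Real.pi :=
    (intervalIntegral.intervalIntegrable_rpow' hneg).const_mul _
  have hg2_int : IntervalIntegrable (fun θ : ℝ => (4:ℝ)^α * (2*Real.pi - θ)^(-α))
      MeasureTheory.volume Real.pi (2*Real.pi) := by
    have h := (intervalIntegral.intervalIntegrable_rpow' hneg (a := 0) (b := Real.pi)).comp_sub_left (2*Real.pi)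
    rw [sub_zero] at h
    have e1 : 2*Real.pi - Real.pi = Real.pi := by ring
    rw [e1] at h
    exact h.symm.const_mul _
  have hne0 : ∀ᵐ θ : ℝ ∂MeasureTheory.volume, θ ≠ 0 := by
    rw [MeasureTheory.ae_iff]
    have hset : {θ : ℝ | ¬ θ ≠ 0} = {0} := by ext; simp
    rw [hset]; exact Real.volume_singleton
  have hne2π : ∀ᵐ θ : ℝ ∂MeasureTheory.volume, θ ≠ 2*Real.pi := by
    rw [MeasureTheory.ae_iff]
    have hset : {θ : ℝ | ¬ θ ≠ 2*Real.pi} = {2*Real.pi} := by ext; simp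
    rw [hset]; exact Real.volume_singleton
  have key : ∀ s θ : ℝ, 0 < s → s ≤ Real.pi → s/4 ≤ Real.sin (θ/2) →
      θ ∈ Set.Icc (0:ℝ) (2*Real.pi) → f θ ≤ (4:ℝ)^α * s^(-α) := by
    intro s θ hs0 hsπ hsin hθmem
    have hlb := lower_bound r θ hr0 hr1.le hθmem
    have heq : ((s/4):ℝ)^(-α) = (4:ℝ)^α * s^(-α) := by
      rw [Real.div_rpow hs0.le (by norm_num), Real.rpow_neg (by norm_num : (0:ℝ) ≤ 4),
        div_eq_mul_inv, inv_inv, mul_comm]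
    rw [← heq]
    exact Real.rpow_le_rpow_of_nonpos (by linarith) (by linarith) (by linarith)
  have jordan : ∀ s : ℝ, 0 ≤ s → s ≤ Real.pi → s/4 ≤ Real.sin (s/2) := by
    intro s hs0 hsπ
    have h := Real.mul_le_sin (x := s/2) (by linarith) (by linarith)
    have hπ4 := Real.pi_le_four
    have h3 : 2/Real.pi * (s/2) = s/Real.pi := by ring
    have h2 : s/4 ≤ 2/Real.pi * (s/2) := by
      rw [h3, div_le_div_iff₀ (by norm_num) hπ]
      nlinarith
    linarith
  have hmono1 : (∫ θ in (0:ℝ)..Real.pi, f θ) ≤ ∫ θ in (0:ℝ)..Real.pi, (4:ℝ)^α * θ^(-α) := by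
    apply intervalIntegral.integral_mono_ae_restrict (by linarith) hint1 hg1_int
    filter_upwards [MeasureTheory.ae_restrict_mem measurableSet_Icc,
      MeasureTheory.ae_restrict_of_ae hne0] with θ hθ hθ0
    have hθpos : 0 < θ := lt_of_le_of_ne hθ.1 (Ne.symm hθ0)
    exact key θ θ hθpos hθ.2 (jordan θ hθ.1 hθ.2) ⟨hθ.1, by linarith [hθ.2]⟩
  have hmono2 : (∫ θ in Real.pi..2*Real.pi, f θ)
      ≤ ∫ θ in Real.pi..2*Real.pi, (4:ℝ)^α * (2*Real.pi - θ)^(-α) := by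
    apply intervalIntegral.integral_mono_ae_restrict (by linarith) hint2 hg2_int
    filter_upwards [MeasureTheory.ae_restrict_mem measurableSet_Icc,
      MeasureTheory.ae_restrict_of_ae hne2π] with θ hθ hθ2π
    have hs0 : 0 < 2*Real.pi - θ := by
      rcases lt_or_eq_of_le hθ.2 with h | h
      · linarith
      · exact absurd h hθ2π
    have hsin : (2*Real.pi - θ)/4 ≤ Real.sin (θ/2) := by
      have h1 : θ/2 = Real.pi - (2*Real.pi - θ)/2 := by ring
      rw [h1, Real.sin_pi_sub]
      exact jordan (2*Real.pi - θ) hs0.le (by linarith [hθ.1])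
    exact key (2*Real.pi - θ) θ hs0 (by linarith [hθ.1]) hsin ⟨by linarith [hθ.1], hθ.2⟩
  calc (∫ θ in (0:ℝ)..2*Real.pi, f θ)
      = (∫ θ in (0:ℝ)..Real.pi, f θ) + ∫ θ in Real.pi..2*Real.pi, f θ := hsplit
    _ ≤ _ := add_le_add hmono1 hmono2

/-- For `1 ≤ p₁ < p₂ < ∞`, the integral means of `(1-z)^{-1/p₂}` of order `p₁` are uniformly
bounded (so `(1-z)^{-1/p₂} ∈ H^{p₁}`), while the integral means of order `p₂`, i.e. the
integrals of `|1 - r e^{iθ}|^{-1}`, are unbounded as `r → 1` (so it is not in `H^{p₂}`). -/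
theorem stmt7 (p₁ p₂ : ℝ) (hp₁ : 1 ≤ p₁) (hp : p₁ < p₂) :
    (∃ M : ℝ, ∀ r ∈ Set.Ico (0 : ℝ) 1,
      (∫ θ in (0 : ℝ)..2 * Real.pi,
        ‖1 - (r : ℂ) * Complex.exp (θ * Complex.I)‖ ^ (-(p₁ / p₂))) ≤ M) ∧
    ¬ (∃ M : ℝ, ∀ r ∈ Set.Ico (0 : ℝ) 1,
      (∫ θ in (0 : ℝ)..2 * Real.pi,
        ‖1 - (r : ℂ) * Complex.exp (θ * Complex.I)‖ ^ (-(1 : ℝ))) ≤ M) :=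
  ⟨part1 p₁ p₂ hp₁ hp, part2⟩
end
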